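/- Assume in addition that f satisfies f(y) ≥ f(x) + ⟨∇f(x), y − x⟩ + (μ/2)‖y − x‖_L² for all x, y ∈ E, where μ ≥ 0. Then for every x ∈ E, every δ = (δ_1,…,δ_n) with δ_i ≥ 0, and every δ-inexact update T at x, with Δ = Σ_{i=1}^n δ_i, one has H(x, T) ≤ Δ + inf_{y ∈ E} { F(y) + ((1 − μ)/2)·‖y − x‖_L² }. -/

import Mathlib

open scoped RealInnerProductSpace
open MeasureTheory

noncomputable section

variable {n : ℕ} {E : Fin n → Type*} [∀ i, NormedAddCommGroup (E i)]
  [∀ i, InnerProductSpace ℝ (E i)] [∀ i, FiniteDimensional ℝ (E i)]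

/-- `U i t`: embedding of the `i`-th block into the product space `E = E₁ × ⋯ × Eₙ`
(the vector with `i`-th block equal to `t` and all other blocks zero). -/
def blockEmbed (i : Fin n) (t : E i) : PiLp 2 E :=
  (WithLp.equiv 2 (∀ j, E j)).symm (Pi.single i t)

/-- `V_i(x,t) = ⟨∇_i f(x), t⟩ + (L_i/2)‖t‖² + Ψ_i(x_i + t)`. -/
def Vi (f : PiLp 2 E → ℝ) (L : Fin n → ℝ) (Ψ : ∀ i, E i → ℝ)
    (x : PiLp 2 E) (i : Fin n) (t : E i) : ℝ :=
  ⟪(gradient f x) i, t⟫ + L i / 2 * ‖t‖ ^ 2 + Ψ i (x i + t)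

/-- `T` is a `δ`-inexact update at `x`:
`V_i(x, T_i) ≤ min{V_i(x,0), δ_i + inf_t V_i(x,t)}` for every block `i`. -/
def IsInexactUpdate (f : PiLp 2 E → ℝ) (L : Fin n → ℝ) (Ψ : ∀ i, E i → ℝ)
    (δ : Fin n → ℝ) (x T : PiLp 2 E) : Prop :=
  ∀ i, Vi f L Ψ x i (T i) ≤ min (Vi f L Ψ x i 0) (δ i + ⨅ t : E i, Vi f L Ψ x i t)

/-- `H(x,T) = f(x) + ⟨∇f(x), T⟩ + (1/2)‖T‖_L² + Ψ(x+T)`. -/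
def Hfun (f : PiLp 2 E → ℝ) (L : Fin n → ℝ) (Ψ : ∀ i, E i → ℝ) (x T : PiLp 2 E) : ℝ :=
  f x + ⟪gradient f x, T⟫ + (1/2) * ∑ i, L i * ‖T i‖ ^ 2 + ∑ i, Ψ i (x i + T i)

/-- `F = f + Ψ` where `Ψ(x) = Σ_i Ψ_i(x_i)`. -/
def Ffun (f : PiLp 2 E → ℝ) (Ψ : ∀ i, E i → ℝ) (x : PiLp 2 E) : ℝ :=
  f x + ∑ i, Ψ i (x i)


/-- A continuous convex function on a finite-dimensional space has a linear lower bound. -/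
lemma convex_linear_lower_bound {Ei : Type*} [NormedAddCommGroup Ei]
    [InnerProductSpace ℝ Ei] [FiniteDimensional ℝ Ei]
    (Ψ : Ei → ℝ) (hconv : ConvexOn ℝ Set.univ Ψ) (hcont : Continuous Ψ) (x₀ : Ei) :
    ∃ C : ℝ, 0 ≤ C ∧ ∀ t : Ei, -(2 * C) * (1 + ‖t‖) ≤ Ψ (x₀ + t) := by
  obtain ⟨C0, hC0⟩ := (isCompact_closedBall x₀ 1).exists_bound_of_continuousOn
    hcont.continuousOn
  refine ⟨max C0 0, le_max_right _ _, fun t => ?_⟩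
  set C := max C0 0 with hC
  have hball : ∀ y : Ei, y ∈ Metric.closedBall x₀ 1 → |Ψ y| ≤ C := by
    intro y hy
    exact le_trans (hC0 y hy) (le_max_left _ _)
  rcases le_or_gt ‖t‖ 1 with h1 | h1
  · have : |Ψ (x₀ + t)| ≤ C := by
      apply hball
      simp [Metric.mem_closedBall, dist_eq_norm]
      simpa using h1
    have hn : 0 ≤ ‖t‖ := norm_nonneg t
    have hCn : 0 ≤ C := le_max_right _ _
    nlinarith [abs_le.mp this]
  · set s := ‖t‖ with hs
    have hs1 : 1 < s := h1
    have hs0 : 0 < s := lt_trans one_pos hs1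
    set a := 1 / s with ha
    have ha0 : 0 < a := by positivity
    have ha1 : a ≤ 1 := by
      rw [ha, div_le_one hs0]; exact hs1.le
    have hconvx := hconv.2 (Set.mem_univ x₀) (Set.mem_univ (x₀ + t))
      (by linarith : (0:ℝ) ≤ 1 - a) ha0.le (by ring)
    have hpt : (1 - a) • x₀ + a • (x₀ + t) = x₀ + a • t := by
      rw [smul_add]; module
    rw [hpt] at hconvx
    have hmem : x₀ + a • t ∈ Metric.closedBall x₀ 1 := by
      simp [Metric.mem_closedBall, dist_eq_norm, norm_smul, abs_of_pos ha0]
      rw [ha]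
      rw [div_mul_cancel₀]
      exact hs0.ne'
    have h2 := hball _ hmem
    have h3 := hball x₀ (by simp)
    have hCn : 0 ≤ C := le_max_right _ _
    have key : Ψ (x₀ + a • t) ≤ (1 - a) * Ψ x₀ + a * Ψ (x₀ + t) := hconvx
    have habs1 := abs_le.mp h2
    have habs2 := abs_le.mp h3
    have has : a * s = 1 := by rw [ha]; field_simp
    nlinarith [mul_le_mul_of_nonneg_left key (le_of_lt hs0)]

lemma Vi_bddBelow (f : PiLp 2 E → ℝ) (L : Fin n → ℝ) (Ψ : ∀ i, E i → ℝ)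
    (x : PiLp 2 E) (i : Fin n) (hL : 0 < L i)
    (hconv : ConvexOn ℝ Set.univ (Ψ i)) (hcont : Continuous (Ψ i)) :
    BddBelow (Set.range (Vi f L Ψ x i)) := by
  obtain ⟨C, hC0, hC⟩ := convex_linear_lower_bound (Ψ i) hconv hcont (x i)
  set g := (gradient f x) i with hg
  set b := ‖g‖ + 2 * C with hb
  refine ⟨-(2*C) - b^2 / (2 * L i), ?_⟩
  rintro _ ⟨t, rfl⟩
  have h1 : -(‖g‖ * ‖t‖) ≤ ⟪g, t⟫ := neg_le_of_abs_le (abs_real_inner_le_norm g t)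
  have h2 := hC t
  have hbn : 0 ≤ b := by positivity
  have hn : 0 ≤ ‖t‖ := norm_nonneg t
  unfold Vi
  rw [← hg]
  have h2L : (0:ℝ) < 2 * L i := by linarith
  have keyeq : L i / 2 * ‖t‖ ^ 2 - b * ‖t‖ + b ^ 2 / (2 * L i)
      = (L i * ‖t‖ - b) ^ 2 / (2 * L i) := by
    field_simp
    ring
  have key : 0 ≤ L i / 2 * ‖t‖ ^ 2 - b * ‖t‖ + b ^ 2 / (2 * L i) := by
    rw [keyeq]
    positivity
  linarith

/-- Upper bound on `H` at an inexact update under strong convexity of `f` (parameter `μ ≥ 0`)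
with respect to `‖·‖_L`:
`H(x,T) ≤ Δ + inf_y { F(y) + ((1−μ)/2)‖y − x‖_L² }`. -/
theorem Hfun_le_inf
    (hn : 0 < n)
    (L : Fin n → ℝ) (hL : ∀ i, 0 < L i)
    (f : PiLp 2 E → ℝ) (hfdiff : Differentiable ℝ f) (hfconv : ConvexOn ℝ Set.univ f)
    (hLip : ∀ (x : PiLp 2 E) (i : Fin n) (t : E i),
      ‖(gradient f (x + blockEmbed i t)) i - (gradient f x) i‖ ≤ L i * ‖t‖)
    (Ψ : ∀ i, E i → ℝ) (hΨconv : ∀ i, ConvexOn ℝ Set.univ (Ψ i))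
    (hΨcont : ∀ i, Continuous (Ψ i))
    (μ : ℝ) (hμ : 0 ≤ μ)
    (hsc : ∀ x y : PiLp 2 E,
      f x + ⟪gradient f x, y - x⟫ + μ / 2 * ∑ i, L i * ‖y i - x i‖ ^ 2 ≤ f y)
    (x : PiLp 2 E) (δ : Fin n → ℝ) (hδ : ∀ i, 0 ≤ δ i)
    (T : PiLp 2 E) (hT : IsInexactUpdate f L Ψ δ x T) :
    Hfun f L Ψ x T ≤ (∑ i, δ i) +
      ⨅ y : PiLp 2 E, (Ffun f Ψ y + (1 - μ) / 2 * ∑ i, L i * ‖y i - x i‖ ^ 2) := by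
  rw [← sub_le_iff_le_add']
  refine le_ciInf fun y => ?_
  rw [sub_le_iff_le_add']
  -- rewrite Hfun as f x + sum of Vi at T
  have hHsum : Hfun f L Ψ x T = f x + ∑ i, Vi f L Ψ x i (T i) := by
    have h : ∑ i, Vi f L Ψ x i (T i)
        = (∑ i, ⟪(gradient f x) i, T i⟫) + (1/2) * ∑ i, L i * ‖T i‖ ^ 2
          + ∑ i, Ψ i (x i + T i) := by
      rw [Finset.mul_sum, ← Finset.sum_add_distrib, ← Finset.sum_add_distrib]
      exact Finset.sum_congr rfl fun i _ => by unfold Vi; ring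
    rw [Hfun, h, PiLp.inner_apply]
    ring
  -- sum of Vi at (y - x)
  have hsum : ∑ i, Vi f L Ψ x i (y i - x i)
      = ⟪gradient f x, y - x⟫ + (1/2) * ∑ i, L i * ‖y i - x i‖ ^ 2
        + ∑ i, Ψ i (y i) := by
    rw [PiLp.inner_apply, Finset.mul_sum, ← Finset.sum_add_distrib,
      ← Finset.sum_add_distrib]
    refine Finset.sum_congr rfl fun i _ => ?_
    unfold Vi
    have h1 : x i + (y i - x i) = y i := by abel
    have h2 : (y - x) i = y i - x i := rfl
    rw [h1, h2]
    ring
  -- inexactness bound per block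
  have step1 : ∑ i, Vi f L Ψ x i (T i)
      ≤ ∑ i, (δ i + Vi f L Ψ x i (y i - x i)) := by
    refine Finset.sum_le_sum fun i _ => ?_
    refine (hT i).trans ((min_le_right _ _).trans (add_le_add_right ?_ _))
    exact ciInf_le (Vi_bddBelow f L Ψ x i (hL i) (hΨconv i) (hΨcont i)) _
  rw [Finset.sum_add_distrib] at step1
  have hscxy := hsc x y
  rw [hHsum]
  unfold Ffun
  linarith [step1, hscxy, hsum]
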